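/- In the graph D (the bipartite join of B' = {a,b,c} and B'' = {u,v,w} with two subdivision vertices per edge, 24 vertices total), the full subgraph obtained by deleting the three vertices of B' (respectively B'') is a disjoint union of three graphs each of type Ê₆ (the affine E₆ Dynkin diagram). -/

import Mathlib

/-- Vertex type of the graph D: the six branch vertices B' ⊔ B'' (each a copy of
`Fin 3`), together with two subdivision vertices `(a, u, false)` (nearer to
a ∈ B') and `(a, u, true)` (nearer to u ∈ B'') on each edge {a, u} of the join
B' ⋆ B''. -/
abbrev V := (Fin 3 ⊕ Fin 3) ⊕ (Fin 3 × Fin 3 × Bool)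

/-- One-directional adjacency of D. -/
def dRel : V → V → Prop := fun v w =>
  match v, w with
  | Sum.inl (Sum.inl a), Sum.inr (a', _, b) => a = a' ∧ b = false
  | Sum.inl (Sum.inr u), Sum.inr (_, u', b) => u = u' ∧ b = true
  | Sum.inr (a, u, b), Sum.inr (a', u', b') => a = a' ∧ u = u' ∧ b ≠ b'
  | _, _ => False

/-- The graph D: the join of B' and B'' with each edge subdivided twice. -/
def D : SimpleGraph V := SimpleGraph.fromRel dRel

/-!
STATEMENT 12: Deleting the three vertices of B' (respectively B'') from D leaves
a disjoint union of three affine Ê₆ Dynkin diagrams.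
-/

/-- Vertex type of the affine Ê₆ diagram: a central vertex together with three
arms of two vertices each. -/
abbrev E6V := Unit ⊕ (Fin 3 × Fin 2)

/-- One-directional adjacency of the affine Ê₆ tree: the center is joined to the
first vertex of each arm, and each arm is a path of length 2. -/
def e6Rel : E6V → E6V → Prop := fun v w =>
  match v, w with
  | Sum.inl _, Sum.inr (_, j) => j = 0
  | Sum.inr (i, j), Sum.inr (i', j') => i = i' ∧ j ≠ j'
  | _, _ => False

/-- The affine Ê₆ Dynkin diagram as a graph. -/
def E6aff : SimpleGraph E6V := SimpleGraph.fromRel e6Rel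

/-- Disjoint union of three copies of Ê₆. -/
def threeE6 : SimpleGraph (Fin 3 × E6V) where
  Adj x y := x.1 = y.1 ∧ E6aff.Adj x.2 y.2
  symm := by
    constructor
    rintro ⟨i, v⟩ ⟨j, w⟩ ⟨h1, h2⟩
    exact ⟨h1.symm, h2.symm⟩
  loopless := by
    constructor
    rintro ⟨i, v⟩ ⟨-, h⟩
    exact E6aff.irrefl h

/-- The vertices of D remaining after deleting B'. -/
def delB' : Set V := {v | ∀ a : Fin 3, v ≠ Sum.inl (Sum.inl a)}

/-- The vertices of D remaining after deleting B''. -/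
def delB'' : Set V := {v | ∀ u : Fin 3, v ≠ Sum.inl (Sum.inr u)}


instance decDRel (v w : V) : Decidable (dRel v w) := by
  rcases v with (a|u)|⟨a,u,b⟩ <;> rcases w with (a'|u')|⟨a',u',b'⟩ <;>
    simp only [dRel] <;> infer_instance

instance decDAdj : DecidableRel D.Adj := fun v w =>
  decidable_of_iff _ (SimpleGraph.fromRel_adj dRel v w).symm

instance decE6Rel (v w : E6V) : Decidable (e6Rel v w) := by
  rcases v with _|⟨i,j⟩ <;> rcases w with _|⟨i',j'⟩ <;>
    simp only [e6Rel] <;> infer_instance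

instance decE6Adj : DecidableRel E6aff.Adj := fun v w =>
  decidable_of_iff _ (SimpleGraph.fromRel_adj e6Rel v w).symm

instance decThree : DecidableRel threeE6.Adj := fun x y =>
  inferInstanceAs (Decidable (x.1 = y.1 ∧ E6aff.Adj x.2 y.2))

def toV1 : Fin 3 × E6V → V
  | (u, Sum.inl _) => Sum.inl (Sum.inr u)
  | (u, Sum.inr (a, j)) => Sum.inr (a, u, j == 0)

def fromV1 : V → Fin 3 × E6V
  | Sum.inl (Sum.inr u) => (u, Sum.inl ())
  | Sum.inr (a, u, b) => (u, Sum.inr (a, if b then 0 else 1))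
  | _ => (0, Sum.inl ())

def toV2 : Fin 3 × E6V → V
  | (a, Sum.inl _) => Sum.inl (Sum.inl a)
  | (a, Sum.inr (u, j)) => Sum.inr (a, u, j != 0)

def fromV2 : V → Fin 3 × E6V
  | Sum.inl (Sum.inl a) => (a, Sum.inl ())
  | Sum.inr (a, u, b) => (a, Sum.inr (u, if b then 1 else 0))
  | _ => (0, Sum.inl ())

lemma mem1 (x : Fin 3 × E6V) : toV1 x ∈ delB' := by
  rcases x with ⟨u, _|⟨a,j⟩⟩ <;> intro a' h <;> simp [toV1] at h

lemma mem2 (x : Fin 3 × E6V) : toV2 x ∈ delB'' := by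
  rcases x with ⟨u, _|⟨a,j⟩⟩ <;> intro a' h <;> simp [toV2] at h

def eq1 : (Fin 3 × E6V) ≃ delB' where
  toFun x := ⟨toV1 x, mem1 x⟩
  invFun v := fromV1 v.1
  left_inv x := by
    rcases x with ⟨u, _|⟨a,j⟩⟩
    · rfl
    · fin_cases j <;> rfl
  right_inv := by
    rintro ⟨(a|u)|⟨a,u,b⟩, hv⟩
    · exact absurd rfl (hv a)
    · rfl
    · cases b <;> rfl

def eq2 : (Fin 3 × E6V) ≃ delB'' where
  toFun x := ⟨toV2 x, mem2 x⟩
  invFun v := fromV2 v.1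
  left_inv x := by
    rcases x with ⟨a, _|⟨u,j⟩⟩
    · rfl
    · fin_cases j <;> rfl
  right_inv := by
    rintro ⟨(a|u)|⟨a,u,b⟩, hv⟩
    · rfl
    · exact absurd rfl (hv u)
    · cases b <;> rfl

lemma adj1 : ∀ x y : Fin 3 × E6V, D.Adj (toV1 x) (toV1 y) ↔ threeE6.Adj x y := by decide
lemma adj2 : ∀ x y : Fin 3 × E6V, D.Adj (toV2 x) (toV2 y) ↔ threeE6.Adj x y := by decide

theorem stmt12 :
    Nonempty ((D.induce delB') ≃g threeE6) ∧
    Nonempty ((D.induce delB'') ≃g threeE6) := by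
  refine ⟨⟨(⟨eq1, ?_⟩ : threeE6 ≃g D.induce delB').symm⟩,
          ⟨(⟨eq2, ?_⟩ : threeE6 ≃g D.induce delB'').symm⟩⟩
  · intro x y; exact adj1 x y
  · intro x y; exact adj2 x y
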